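/- Let F : ℝ^d → ℝ be differentiable with L-Lipschitz gradient (‖∇F(x) − ∇F(y)‖ ≤ L‖x − y‖ for all x, y, with L > 0). Let 1 ≤ r ≤ d, let P ∈ ℝ^{d×r} be any matrix satisfying P^⊤P = (d/r)·I_r, let g ∈ ℝ^d, set η := r/(Ld) and x⁺ := x − η·PP^⊤g. Then (η/2)·‖P^⊤∇F(x)‖² + F(x⁺) − F(x) ≤ (η/2)·‖P^⊤(g − ∇F(x))‖². -/

import Mathlib

open MeasureTheory Real Matrix

noncomputable section

open InnerProductSpace

lemma descent {n : ℕ} (F : EuclideanSpace ℝ (Fin n) → ℝ) (hdiff : Differentiable ℝ F)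
    (L : ℝ) (hL : 0 < L)
    (hLip : ∀ x y, ‖gradient F x - gradient F y‖ ≤ L * ‖x - y‖)
    (x u : EuclideanSpace ℝ (Fin n)) :
    F (x + u) ≤ F x + ⟪gradient F x, u⟫_ℝ + L / 2 * ‖u‖ ^ 2 := by
  set φ' : ℝ → ℝ := fun t => ⟪gradient F (x + t • u), u⟫_ℝ with hφ'
  have hgradcont : Continuous fun y => gradient F y := by
    have : LipschitzWith L.toNNReal (fun y => gradient F y) := by
      apply LipschitzWith.of_dist_le_mul
      intro a b
      simpa [dist_eq_norm, Real.coe_toNNReal _ hL.le] using hLip a b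
    exact this.continuous
  have hderiv : ∀ t : ℝ, HasDerivAt (fun t : ℝ => F (x + t • u)) (φ' t) t := by
    intro t
    have hc : HasDerivAt (fun t : ℝ => x + t • u) u t := by
      simpa using ((hasDerivAt_id t).smul_const u).const_add x
    have hF := ((hdiff (x + t • u)).hasGradientAt).hasFDerivAt
    have := hF.comp_hasDerivAt t hc
    simpa [hφ', toDual_apply_apply, Function.comp_def] using this
  have hcont : Continuous φ' :=
    ((hgradcont.comp (by continuity)).inner continuous_const)
  have hFTC : F (x + u) - F x = ∫ t in (0:ℝ)..1, φ' t := by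
    have := intervalIntegral.integral_eq_sub_of_hasDerivAt
      (fun t _ => hderiv t) (hcont.intervalIntegrable 0 1)
    simp at this
    rw [this]
  have hbound : ∫ t in (0:ℝ)..1, φ' t ≤ ⟪gradient F x, u⟫_ℝ + L / 2 * ‖u‖ ^ 2 := by
    have h1 : ∀ t ∈ Set.Icc (0:ℝ) 1, φ' t ≤ ⟪gradient F x, u⟫_ℝ + L * t * ‖u‖ ^ 2 := by
      intro t ht
      have : φ' t - ⟪gradient F x, u⟫_ℝ = ⟪gradient F (x + t • u) - gradient F x, u⟫_ℝ := by
        rw [inner_sub_left]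
      have hb : ⟪gradient F (x + t • u) - gradient F x, u⟫_ℝ ≤ L * t * ‖u‖ ^ 2 := by
        calc _ ≤ ‖gradient F (x + t • u) - gradient F x‖ * ‖u‖ := real_inner_le_norm _ _
          _ ≤ (L * ‖(x + t • u) - x‖) * ‖u‖ := by
              gcongr; exact hLip _ _
          _ = L * t * ‖u‖ ^ 2 := by
              simp [norm_smul, abs_of_nonneg ht.1]; ring
      linarith [this ▸ hb]
    calc (∫ t in (0:ℝ)..1, φ' t)
        ≤ ∫ t in (0:ℝ)..1, (⟪gradient F x, u⟫_ℝ + L * t * ‖u‖ ^ 2) := by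
          apply intervalIntegral.integral_mono_on (by norm_num)
            (hcont.intervalIntegrable 0 1) (by apply Continuous.intervalIntegrable; continuity)
          exact h1
      _ = ⟪gradient F x, u⟫_ℝ + L / 2 * ‖u‖ ^ 2 := by
          simp_rw [show ∀ t : ℝ, L * t * ‖u‖ ^ 2 = (L * ‖u‖ ^ 2) * t from fun t => by ring]
          rw [intervalIntegral.integral_add intervalIntegrable_const
            ((continuous_mul_left (L * ‖u‖ ^ 2)).intervalIntegrable 0 1),
            intervalIntegral.integral_const_mul, integral_id, intervalIntegral.integral_const]
          simp
          ring
  linarith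

lemma edot {n : ℕ} (v w : EuclideanSpace ℝ (Fin n)) :
    ⟪v, w⟫_ℝ = (EuclideanSpace.equiv (Fin n) ℝ v) ⬝ᵥ (EuclideanSpace.equiv (Fin n) ℝ w) := by
  simp [PiLp.inner_apply, dotProduct, mul_comm]

lemma enorm {n : ℕ} (v : EuclideanSpace ℝ (Fin n)) :
    ‖v‖ ^ 2 = (EuclideanSpace.equiv (Fin n) ℝ v) ⬝ᵥ (EuclideanSpace.equiv (Fin n) ℝ v) :=
  (real_inner_self_eq_norm_sq v).symm.trans (edot v v)

lemma dotA {m n : ℕ} (A : Matrix (Fin m) (Fin n) ℝ) (v : Fin n → ℝ) (w : Fin m → ℝ) :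
    A.mulVec v ⬝ᵥ w = v ⬝ᵥ Aᵀ.mulVec w := by
  rw [dotProduct_comm, Matrix.dotProduct_mulVec, ← Matrix.mulVec_transpose, dotProduct_comm]

/-- Matrix-vector multiplication acting on Euclidean spaces. -/
def mulVecE {m n : ℕ} (A : Matrix (Fin m) (Fin n) ℝ) (v : EuclideanSpace ℝ (Fin n)) :
    EuclideanSpace ℝ (Fin m) :=
  (EuclideanSpace.equiv (Fin m) ℝ).symm (A.mulVec (EuclideanSpace.equiv (Fin n) ℝ v))

/-- One-step descent inequality for the projected SGD update with
stepsize `η = r/(Ld)`: for any matrix `P` with `PᵀP = (d/r) I_r` and any `g`,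
`(η/2) ‖Pᵀ∇F(x)‖² + F(x⁺) − F(x) ≤ (η/2) ‖Pᵀ(g − ∇F(x))‖²` where
`x⁺ = x − η P Pᵀ g`. -/
theorem stmt4 {d r : ℕ} (hr : 1 ≤ r) (hrd : r ≤ d)
    (F : EuclideanSpace ℝ (Fin d) → ℝ) (hdiff : Differentiable ℝ F)
    (L : ℝ) (hL : 0 < L)
    (hLip : ∀ x y, ‖gradient F x - gradient F y‖ ≤ L * ‖x - y‖)
    (P : Matrix (Fin d) (Fin r) ℝ)
    (hP : Pᵀ * P = ((d : ℝ) / r) • (1 : Matrix (Fin r) (Fin r) ℝ))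
    (g x : EuclideanSpace ℝ (Fin d)) (η : ℝ) (hη : η = r / (L * d)) :
    η / 2 * ‖mulVecE Pᵀ (gradient F x)‖ ^ 2
        + F (x - η • mulVecE (P * Pᵀ) g) - F x ≤
      η / 2 * ‖mulVecE Pᵀ (g - gradient F x)‖ ^ 2 := by
  have hrpos : (0:ℝ) < r := by exact_mod_cast hr
  have hdpos : (0:ℝ) < d := by exact_mod_cast hr.trans hrd
  set c : ℝ := (d:ℝ) / r with hc
  have hηpos : 0 < η := by rw [hη]; positivity
  have hkey : L * η * c = 1 := by
    rw [hη, hc]; field_simp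
  set G := gradient F x with hG
  set e := fun {k : ℕ} => (EuclideanSpace.equiv (Fin k) ℝ).toEquiv
  set a : Fin r → ℝ := Pᵀ.mulVec (EuclideanSpace.equiv (Fin d) ℝ G) with ha
  set b : Fin r → ℝ := Pᵀ.mulVec (EuclideanSpace.equiv (Fin d) ℝ g) with hb
  set u := -(η • mulVecE (P * Pᵀ) g) with hu
  have hxu : x - η • mulVecE (P * Pᵀ) g = x + u := by rw [hu, sub_eq_add_neg]
  have hdes := descent F hdiff L hL hLip x u
  -- inner ⟪G, u⟫
  have hmm : EuclideanSpace.equiv (Fin d) ℝ (mulVecE (P * Pᵀ) g)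
      = P.mulVec b := by
    rw [hb, Matrix.mulVec_mulVec]; rfl
  have h1 : ⟪G, u⟫_ℝ = -η * (a ⬝ᵥ b) := by
    rw [hu, inner_neg_right, real_inner_smul_right, edot, hmm, dotProduct_comm, dotA, dotProduct_comm b, neg_mul]
  have h2 : ‖u‖ ^ 2 = η ^ 2 * (c * (b ⬝ᵥ b)) := by
    rw [hu, norm_neg, norm_smul, mul_pow, Real.norm_eq_abs, sq_abs]
    congr 1
    rw [_root_.enorm, hmm, dotA, Matrix.mulVec_mulVec, hP,
      Matrix.smul_mulVec, Matrix.one_mulVec, dotProduct_smul, smul_eq_mul]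
  have h3 : ‖mulVecE Pᵀ G‖ ^ 2 = a ⬝ᵥ a := by rw [_root_.enorm]; rfl
  have h4 : ‖mulVecE Pᵀ (g - G)‖ ^ 2 = (b - a) ⬝ᵥ (b - a) := by
    rw [_root_.enorm]
    have : (EuclideanSpace.equiv (Fin d) ℝ) (g - G)
        = EuclideanSpace.equiv (Fin d) ℝ g - EuclideanSpace.equiv (Fin d) ℝ G := rfl
    show Pᵀ.mulVec _ ⬝ᵥ Pᵀ.mulVec _ = _
    rw [this, Matrix.mulVec_sub]
  set X := a ⬝ᵥ a with hX
  set Y := a ⬝ᵥ b with hY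
  set Z := b ⬝ᵥ b with hZ
  have hexp : (b - a) ⬝ᵥ (b - a) = Z - 2 * Y + X := by
    rw [hX, hY, hZ]
    simp only [dotProduct_sub, sub_dotProduct, dotProduct_comm a b]
    ring
  have hc2 : L / 2 * (η ^ 2 * (c * Z)) = η / 2 * Z := by
    calc L / 2 * (η ^ 2 * (c * Z)) = (L * η * c) * (η / 2 * Z) := by ring
      _ = η / 2 * Z := by rw [hkey]; ring
  rw [hxu]
  rw [h3]
  rw [h4]
  rw [hexp]
  rw [h1, h2, hc2] at hdes
  linarith [hdes, show η / 2 * (Z - 2 * Y + X) = η / 2 * X + -(η * Y) + η / 2 * Z from by ring]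

end
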